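/- arXiv:1804.11015 — 2 statements merged into one kernel-verified Lean document; each statement's English description precedes it below -/
import Mathlib

section
/- Fix integers n, k with 1 ≤ k ≤ n−1, and let L(q, n, k) = ∏_{j=0}^{k−1} (1 − q^{−(n−j)}). If either q ≥ 3 and t ≥ 1, or q = 2 and t ≥ 2 (q, t integers), then 1 − q^{−(n−k+1/2)·t} ≤ L(q^t, n, k). Moreover, if q = 2 and t = 1, then (1/2)·(1 − 2^{−(n−k+1/2)}) ≤ L(2, n, k). -/
open Real

noncomputable def LinIndepProb (q : ℝ) (n k : ℕ) : ℝ :=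
  ∏ j ∈ Finset.range k, (1 - q ^ (-((n : ℝ) - (j : ℝ))))

lemma key_prod (Q : ℝ) (hQ : 1 < Q) (n : ℕ) :
    ∀ k ≤ n, 1 - (Q ^ (n - k))⁻¹ / (Q - 1) ≤
      ∏ j ∈ Finset.range k, (1 - (Q ^ (n - j))⁻¹) := by
  intro k
  induction k with
  | zero =>
    intro _
    simp only [Finset.prod_range_zero]
    have hQ0 : (0:ℝ) < Q := by linarith
    have hQ1' : (0:ℝ) < Q - 1 := by linarith
    have h1 : 0 < (Q ^ (n - 0))⁻¹ / (Q - 1) := by positivity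
    linarith
  | succ k ih =>
    intro hkn
    have hk : k ≤ n := by omega
    have ihk := ih hk
    rw [Finset.prod_range_succ]
    have hQ0 : (0 : ℝ) < Q := by linarith
    have he : n - k = (n - (k + 1)) + 1 := by omega
    set p : ℝ := Q ^ (n - (k + 1)) with hp
    have hp0 : 0 < p := pow_pos hQ0 _
    have hpQ : Q ^ (n - k) = p * Q := by rw [he, pow_succ]
    set y : ℝ := (Q ^ (n - k))⁻¹ with hy
    have hy0 : 0 < y := by rw [hy]; positivity
    have hy1 : y ≤ 1 := by
      rw [hy]
      exact inv_le_one_of_one_le₀ (one_le_pow₀ hQ.le)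
    have h1y : (0:ℝ) ≤ 1 - y := by linarith
    set c : ℝ := (Q - 1)⁻¹ with hc
    have hc0 : 0 < c := by rw [hc]; exact inv_pos.2 (by linarith)
    have hc1 : c * (Q - 1) = 1 := inv_mul_cancel₀ (by linarith)
    have hstep : 1 - p⁻¹ * c ≤ (1 - y * c) * (1 - y) := by
      have hpi : p⁻¹ = Q * y := by
        rw [hy, hpQ, mul_inv]
        field_simp
      rw [hpi]
      nlinarith [mul_nonneg (mul_nonneg hy0.le hy0.le) hc0.le]
    calc 1 - (Q ^ (n - (k + 1)))⁻¹ / (Q - 1) = 1 - p⁻¹ * c := by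
          rw [div_eq_mul_inv]
      _ ≤ (1 - y * c) * (1 - y) := hstep
      _ ≤ (∏ j ∈ Finset.range k, (1 - (Q ^ (n - j))⁻¹)) * (1 - y) := by
          apply mul_le_mul_of_nonneg_right _ h1y
          calc 1 - y * c = 1 - y / (Q - 1) := by rw [div_eq_mul_inv]
            _ ≤ _ := ihk
      _ = _ := rfl

lemma prod_eq (Q : ℝ) (hQ : 0 < Q) (n k : ℕ) (h : k ≤ n) :
    LinIndepProb Q n k = ∏ j ∈ Finset.range k, (1 - (Q ^ (n - j))⁻¹) := by
  unfold LinIndepProb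
  apply Finset.prod_congr rfl
  intro j hj
  have hj' : j ≤ n := le_trans (Finset.mem_range.1 hj).le h
  rw [show (n : ℝ) - (j : ℝ) = ((n - j : ℕ) : ℝ) by push_cast [Nat.cast_sub hj']; ring]
  rw [Real.rpow_neg hQ.le, Real.rpow_natCast]

lemma main1 (Q : ℝ) (hQ : 3 ≤ Q) (n k : ℕ) (hk1 : 1 ≤ k) (hkn : k ≤ n - 1) :
    1 - (Q ^ (n - k))⁻¹ * (Real.sqrt Q)⁻¹ ≤ LinIndepProb Q n k := by
  have hQ1 : (1:ℝ) < Q := by linarith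
  have hQ0 : (0:ℝ) < Q := by linarith
  have hkn' : k ≤ n := by omega
  rw [prod_eq Q hQ0 n k hkn']
  refine le_trans ?_ (key_prod Q hQ1 n k hkn')
  have hs : Real.sqrt Q ≤ Q - 1 := by
    have h1 : Q ≤ (Q - 1) ^ 2 := by nlinarith
    calc Real.sqrt Q ≤ Real.sqrt ((Q - 1) ^ 2) := Real.sqrt_le_sqrt h1
      _ = Q - 1 := Real.sqrt_sq (by linarith)
  have hs0 : 0 < Real.sqrt Q := Real.sqrt_pos.2 hQ0
  have hp0 : (0:ℝ) < (Q ^ (n - k))⁻¹ := by positivity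
  have : (Q - 1)⁻¹ ≤ (Real.sqrt Q)⁻¹ := by
    apply inv_anti₀ hs0 hs
  have h2 : (Q ^ (n - k))⁻¹ / (Q - 1) ≤ (Q ^ (n - k))⁻¹ * (Real.sqrt Q)⁻¹ := by
    rw [div_eq_mul_inv]
    exact mul_le_mul_of_nonneg_left this hp0.le
  linarith

/-- Fix `1 ≤ k ≤ n − 1`.  If either `q ≥ 3` and `t ≥ 1`, or `q = 2` and
`t ≥ 2`, then `1 − q^{−(n−k+1/2)t} ≤ L(q^t, n, k)`; moreover if `q = 2` and `t = 1` then
`(1/2)(1 − 2^{−(n−k+1/2)}) ≤ L(2, n, k)`. -/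
theorem linIndepProb_lower_bound (n k : ℕ) (hk : 1 ≤ k) (hkn : k ≤ n - 1)
    (q t : ℕ) (hq : 2 ≤ q) (ht : 1 ≤ t) :
    ((3 ≤ q ∧ 1 ≤ t) ∨ (q = 2 ∧ 2 ≤ t) →
      1 - ((q : ℝ) : ℝ) ^ (-(((n : ℝ) - (k : ℝ) + 1 / 2) * (t : ℝ))) ≤
        LinIndepProb ((q : ℝ) ^ (t : ℕ)) n k) ∧
    (q = 2 ∧ t = 1 →
      (1 / 2 : ℝ) * (1 - (2 : ℝ) ^ (-((n : ℝ) - (k : ℝ) + 1 / 2))) ≤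
        LinIndepProb 2 n k) := by
  have hn2 : 2 ≤ n := by omega
  have hkn' : k ≤ n := by omega
  have hm1 : 1 ≤ n - k := by omega
  have hmr : ((n - k : ℕ) : ℝ) = (n : ℝ) - (k : ℝ) := by
    push_cast [Nat.cast_sub hkn']; ring
  have hq0 : (0:ℝ) < (q : ℝ) := by positivity
  constructor
  · intro h
    set Q : ℝ := (q : ℝ) ^ (t : ℕ) with hQdef
    have hQ0 : (0:ℝ) < Q := by positivity
    have hQ3 : (3:ℝ) ≤ Q := by
      rcases h with ⟨hq3, _⟩ | ⟨hq2, ht2⟩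
      · calc (3:ℝ) = (3:ℝ) ^ 1 := by norm_num
          _ ≤ (q:ℝ) ^ 1 := by
            apply pow_le_pow_left₀ (by norm_num)
            exact_mod_cast hq3
          _ ≤ (q:ℝ) ^ t := by
            apply pow_le_pow_right₀ _ ht
            have : (3:ℝ) ≤ (q:ℝ) := by exact_mod_cast hq3
            linarith
      · subst hq2
        calc (3:ℝ) ≤ (2:ℝ) ^ 2 := by norm_num
          _ ≤ (2:ℝ) ^ t := pow_le_pow_right₀ (by norm_num) ht2
          _ = ((2:ℕ):ℝ) ^ t := by norm_num
    have hexp : ((q : ℝ) : ℝ) ^ (-(((n : ℝ) - (k : ℝ) + 1 / 2) * (t : ℝ))) =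
        (Q ^ (n - k))⁻¹ * (Real.sqrt Q)⁻¹ := by
      have e1 : -(((n : ℝ) - (k : ℝ) + 1 / 2) * (t : ℝ)) =
          (t : ℝ) * (-((n - k : ℕ) : ℝ) + -(1/2)) := by
        rw [hmr]; ring
      rw [e1, Real.rpow_mul hq0.le, Real.rpow_natCast, Real.rpow_add hQ0,
        Real.rpow_neg hQ0.le, Real.rpow_natCast, Real.rpow_neg hQ0.le,
        ← Real.sqrt_eq_rpow]
    rw [hexp]
    exact main1 Q hQ3 n k hk hkn
  · rintro ⟨hq2, ht1⟩
    have hb := key_prod 2 (by norm_num) n k hkn'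
    rw [← prod_eq 2 (by norm_num) n k hkn'] at hb
    have h2 : (2:ℝ) ≤ 2 ^ (n - k) := by
      calc (2:ℝ) = 2 ^ 1 := (pow_one 2).symm
        _ ≤ 2 ^ (n - k) := pow_le_pow_right₀ (by norm_num) hm1
    have h3 : (2 ^ (n - k) : ℝ)⁻¹ ≤ 1/2 := by
      rw [inv_le_comm₀ (by positivity) (by norm_num)]
      · linarith
    have h4 : (1:ℝ)/2 ≤ LinIndepProb 2 n k := by
      have : (2:ℝ) - 1 = 1 := by norm_num
      rw [this, div_one] at hb
      linarith
    have h5 : (0:ℝ) < (2 : ℝ) ^ (-((n : ℝ) - (k : ℝ) + 1 / 2)) :=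
      Real.rpow_pos_of_pos (by norm_num) _
    nlinarith
end

section
/- If C ⊂ P^r_k is a curve over a field k with homogeneous coordinate ring R (the quotient of k[x_0, …, x_r] by the saturated homogeneous ideal of C), then the Hilbert function of R satisfies dim_k R_d ≥ d + 1 for every natural number d. -/
open MvPolynomial

attribute [local instance] MvPolynomial.gradedAlgebra

/-- The degree-`d` graded piece of the homogeneous coordinate ring
`R = k[x_0, …, x_r]/I`, i.e. the image of the space of degree-`d` homogeneous
polynomials in the quotient. -/
noncomputable def quotGradedPiece (k : Type) [Field k] (r : ℕ)
    (I : Ideal (MvPolynomial (Fin (r + 1)) k)) (d : ℕ) :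
    Submodule k (MvPolynomial (Fin (r + 1)) k ⧸ I) :=
  (MvPolynomial.homogeneousSubmodule (Fin (r + 1)) k d).map
    (Ideal.Quotient.mkₐ k I).toLinearMap

/-- The Hilbert function `d ↦ dim_k R_d` of `R = k[x_0, …, x_r]/I`. -/
noncomputable def hilbertFunction (k : Type) [Field k] (r : ℕ)
    (I : Ideal (MvPolynomial (Fin (r + 1)) k)) (d : ℕ) : ℕ :=
  Module.finrank k (quotGradedPiece k r I d)

set_option maxHeartbeats 1000000
set_option synthInstance.maxHeartbeats 400000

section Aux

variable {k : Type} [Field k] {r : ℕ}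

lemma Aux.degree_support {g : MvPolynomial (Fin (r + 1)) k} {n : ℕ}
    (hg : g.IsHomogeneous n) {s : Fin (r + 1) →₀ ℕ} (hs : s ∈ g.support) :
    s.degree = n := by
  by_contra h
  exact (MvPolynomial.mem_support_iff.mp hs) (hg.coeff_eq_zero h)

lemma Aux.degree_single_add (j : Fin (r + 1)) (s : Fin (r + 1) →₀ ℕ) :
    (Finsupp.single j 1 + s).degree = 1 + s.degree := by
  have h1 : (Finsupp.single j 1).degree = 1 := by
    exact Finsupp.degree_single j 1
  rw [Finsupp.degree_eq_weight_one, map_add, ← Finsupp.degree_eq_weight_one, h1]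

lemma Aux.single_add_sub {s : Fin (r + 1) →₀ ℕ} {j : Fin (r + 1)} (hj : s j ≠ 0) :
    Finsupp.single j 1 + (s - Finsupp.single j 1) = s := by
  ext a
  simp only [Finsupp.add_apply, Finsupp.tsub_apply, Finsupp.single_apply]
  by_cases h : j = a
  · subst h; simp; omega
  · simp [h]

lemma Aux.algebraMap_surj (q : Ideal (MvPolynomial (Fin (r + 1)) k))
    (hX : ∀ i : Fin (r + 1), X i ∈ q) :
    Function.Surjective (algebraMap k (MvPolynomial (Fin (r + 1)) k ⧸ q)) := by
  intro y
  obtain ⟨f, rfl⟩ := Ideal.Quotient.mk_surjective y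
  induction f using MvPolynomial.induction_on with
  | C a => exact ⟨a, rfl⟩
  | add p q ihp ihq =>
    obtain ⟨a, ha⟩ := ihp; obtain ⟨b, hb⟩ := ihq
    exact ⟨a + b, by rw [map_add, ha, hb, RingHom.map_add]⟩
  | mul_X p i ih =>
    refine ⟨0, ?_⟩
    rw [map_zero, RingHom.map_mul, show (Ideal.Quotient.mk q) (X i) = 0 from
      Ideal.Quotient.eq_zero_iff_mem.mpr (hX i), mul_zero]

end Aux

section KeyAux

variable {k : Type} [Field k] {r : ℕ}

lemma Aux.exists_chain_of_two_le_krullDim {α : Type*} [Preorder α]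
    (h : 2 ≤ Order.krullDim α) : ∃ a b c : α, a < b ∧ b < c := by
  by_contra hc
  push_neg at hc
  have hlen : ∀ p : LTSeries α, p.length ≤ 1 := by
    intro p
    by_contra hp
    push_neg at hp
    have h2 : 2 ≤ p.length := hp
    have h01 : p ⟨0, by omega⟩ < p ⟨1, by omega⟩ := p.strictMono (by simp [Fin.lt_def])
    have h12 : p ⟨1, by omega⟩ < p ⟨2, by omega⟩ := p.strictMono (by simp [Fin.lt_def])
    exact hc _ _ _ h01 h12
  have hd : Order.krullDim α ≤ 1 := by
    refine iSup_le fun p => ?_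
    have := hlen p
    exact_mod_cast this
  have : (2 : WithBot (WithTop ℕ)) ≤ 1 := le_trans h hd
  norm_num at this

lemma Aux.fd_homog (d : ℕ) :
    FiniteDimensional k (homogeneousSubmodule (Fin (r + 1)) k d) := by
  refine Submodule.finiteDimensional_of_le (S₂ := restrictTotalDegree (Fin (r + 1)) k d) ?_
  intro p hp
  rw [mem_restrictTotalDegree]
  exact ((mem_homogeneousSubmodule _ _).mp hp).totalDegree_le

lemma Aux.fd_map {V W : Type*} [AddCommGroup V] [Module k V] [AddCommGroup W] [Module k W]
    (p : Submodule k V) [FiniteDimensional k p] (f : V →ₗ[k] W) :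
    FiniteDimensional k (p.map f) := by
  have : p.map f = LinearMap.range (f ∘ₗ p.subtype) := by
    rw [LinearMap.range_comp, Submodule.range_subtype]
  rw [this]
  infer_instance

instance (I : Ideal (MvPolynomial (Fin (r + 1)) k)) (d : ℕ) :
    FiniteDimensional k (quotGradedPiece k r I d) := by
  have := Aux.fd_homog (k := k) (r := r) d
  exact Aux.fd_map _ _

theorem Aux.key (q : Ideal (MvPolynomial (Fin (r + 1)) k))
    (hqp : q.IsPrime)
    (hqd : 2 ≤ ringKrullDim (MvPolynomial (Fin (r + 1)) k ⧸ q)) :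
    ∀ d : ℕ, d + 1 ≤ Module.finrank k (quotGradedPiece k r q d) := by
  haveI := hqp
  haveI hdom : IsDomain (MvPolynomial (Fin (r + 1)) k ⧸ q) := Ideal.Quotient.isDomain q
  haveI : Nontrivial (MvPolynomial (Fin (r + 1)) k ⧸ q) := hdom.toNontrivial
  -- a variable outside q
  have hXi : ∃ i : Fin (r + 1), X i ∉ q := by
    by_contra hx
    push_neg at hx
    have hsurj := Aux.algebraMap_surj q hx
    have h0 : ringKrullDim (MvPolynomial (Fin (r + 1)) k ⧸ q) ≤ ringKrullDim k :=
      ringKrullDim_le_of_surjective _ hsurj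
    rw [ringKrullDim_eq_zero_of_field] at h0
    have : (2 : WithBot (WithTop ℕ)) ≤ 0 := le_trans hqd h0
    norm_num at this
  obtain ⟨i, hi⟩ := hXi
  set t : MvPolynomial (Fin (r + 1)) k ⧸ q := Ideal.Quotient.mk q (X i) with ht_def
  have ht : t ≠ 0 := fun h => hi (Ideal.Quotient.eq_zero_iff_mem.mp h)
  set μ : (MvPolynomial (Fin (r + 1)) k ⧸ q) →ₗ[k] (MvPolynomial (Fin (r + 1)) k ⧸ q) :=
    LinearMap.mulLeft k t with hμ_def
  have hμinj : Function.Injective μ := fun a b hab => by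
    simp only [hμ_def, LinearMap.mulLeft_apply] at hab
    exact mul_left_cancel₀ ht hab
  have hle : ∀ e : ℕ,
      (quotGradedPiece k r q e).map μ ≤ quotGradedPiece k r q (e + 1) := by
    intro e y hy
    obtain ⟨x, hx, rfl⟩ := hy
    obtain ⟨h, hh, rfl⟩ := hx
    refine ⟨X i * h, ?_, ?_⟩
    · refine SetLike.mem_coe.mpr ((mem_homogeneousSubmodule _ _).mpr ?_)
      have := (isHomogeneous_X k i).mul ((mem_homogeneousSubmodule _ _).mp hh)
      exact Nat.add_comm 1 e ▸ this
    · simp only [hμ_def, LinearMap.mulLeft_apply, Ideal.Quotient.mkₐ_eq_mk, AlgHom.toLinearMap_apply]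
      rw [RingHom.map_mul]
  have hlt : ∀ e : ℕ,
      (quotGradedPiece k r q e).map μ ≠ quotGradedPiece k r q (e + 1) := by
    intro d hEq
    -- Claim: pieces of degree > d are divisible by powers of t
    have claim : ∀ m : ℕ, quotGradedPiece k r q (d + 1 + m) ≤
        (quotGradedPiece k r q d).map (LinearMap.mulLeft k (t ^ (m + 1))) := by
      intro m
      induction m with
      | zero =>
        rw [pow_one]
        exact le_of_eq hEq.symm
      | succ m ih =>
        intro y hy
        obtain ⟨g, hg, rfl⟩ := hy
        have hgh : g.IsHomogeneous (d + 1 + (m + 1)) := (mem_homogeneousSubmodule _ _).mp hg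
        have hrw : (Ideal.Quotient.mkₐ k q).toLinearMap g
            = ∑ s ∈ g.support, (Ideal.Quotient.mkₐ k q).toLinearMap
                (monomial s (coeff s g)) := by
          rw [← map_sum]
          exact congrArg _ (as_sum g)
        rw [hrw]
        refine Submodule.sum_mem _ fun s hs => ?_
        have hdeg : s.degree = d + 1 + (m + 1) := Aux.degree_support hgh hs
        have hsne : s ≠ 0 := by
          intro h0
          rw [h0, map_zero] at hdeg
          omega
        obtain ⟨j, hj⟩ : ∃ j, s j ≠ 0 := by
          by_contra hall
          push_neg at hall
          exact hsne (Finsupp.ext fun a => hall a)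
        set s' := s - Finsupp.single j 1 with hs'def
        have hss : Finsupp.single j 1 + s' = s := Aux.single_add_sub hj
        have hdeg' : s'.degree = d + 1 + m := by
          have h2 := Aux.degree_single_add j s'
          rw [hss] at h2
          have h3 : (Finsupp.single j (1:ℕ)).degree = 1 := by
            exact Finsupp.degree_single j 1
          omega
        have hmono : (monomial s' (coeff s g)) ∈ homogeneousSubmodule (Fin (r+1)) k (d+1+m) :=
          (mem_homogeneousSubmodule _ _).mpr (isHomogeneous_monomial _ hdeg')
        have hmem : (Ideal.Quotient.mkₐ k q).toLinearMap (monomial s' (coeff s g))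
            ∈ quotGradedPiece k r q (d+1+m) := Submodule.mem_map_of_mem hmono
        obtain ⟨x, hx, hxe⟩ := ih hmem
        have hXx : (Ideal.Quotient.mk q (X j)) * x ∈ quotGradedPiece k r q (d+1) := by
          obtain ⟨h, hh, rfl⟩ := hx
          refine ⟨X j * h, ?_, ?_⟩
          · refine SetLike.mem_coe.mpr ((mem_homogeneousSubmodule _ _).mpr ?_)
            have h4 := (isHomogeneous_X k j).mul ((mem_homogeneousSubmodule _ _).mp hh)
            exact Nat.add_comm 1 d ▸ h4
          · simp only [Ideal.Quotient.mkₐ_eq_mk, AlgHom.toLinearMap_apply]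
            rw [RingHom.map_mul]
        rw [← hEq] at hXx
        obtain ⟨x', hx', hx'e⟩ := hXx
        refine ⟨x', hx', ?_⟩
        have hsplit : (monomial s (coeff s g) : MvPolynomial (Fin (r+1)) k)
            = X j * monomial s' (coeff s g) := by
          rw [← hss, monomial_single_add, pow_one]
        simp only [LinearMap.mulLeft_apply, hμ_def] at hxe hx'e ⊢
        simp only [Ideal.Quotient.mkₐ_eq_mk, AlgHom.toLinearMap_apply] at hxe ⊢
        rw [hsplit, RingHom.map_mul, ← hxe]
        calc t ^ (m + 1 + 1) * x' = t ^ (m + 1) * (t * x') := by ring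
          _ = t ^ (m + 1) * ((Ideal.Quotient.mk q) (X j) * x) := by rw [hx'e]
          _ = (Ideal.Quotient.mk q) (X j) * (t ^ (m + 1) * x) := by ring
    -- R ⧸ q is a finite module over k[T], T ↦ t
    letI alg : Algebra (Polynomial k) (MvPolynomial (Fin (r+1)) k ⧸ q) :=
      (Polynomial.aeval t).toRingHom.toAlgebra
    haveI tower : IsScalarTower k (Polynomial k) (MvPolynomial (Fin (r+1)) k ⧸ q) := by
      refine IsScalarTower.of_algebraMap_eq fun c => ?_
      show algebraMap k _ c = (Polynomial.aeval t) (Polynomial.C c)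
      rw [Polynomial.aeval_C]
    have hWle : quotGradedPiece k r q d ≤
        (restrictTotalDegree (Fin (r+1)) k d).map (Ideal.Quotient.mkₐ k q).toLinearMap := by
      refine Submodule.map_mono fun p hp => ?_
      rw [mem_restrictTotalDegree]
      exact ((mem_homogeneousSubmodule _ _).mp hp).totalDegree_le
    haveI hfin : Module.Finite (Polynomial k) (MvPolynomial (Fin (r+1)) k ⧸ q) := by
      set W : Submodule k (MvPolynomial (Fin (r+1)) k ⧸ q) :=
        (restrictTotalDegree (Fin (r+1)) k d).map (Ideal.Quotient.mkₐ k q).toLinearMap with hWdef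
      haveI hWfd : FiniteDimensional k W := Aux.fd_map _ _
      obtain ⟨S, hS⟩ := Module.Finite.iff_fg.mp hWfd
      have hspan : ∀ y : MvPolynomial (Fin (r+1)) k ⧸ q,
          y ∈ Submodule.span (Polynomial k) (W : Set _) := by
        intro y
        obtain ⟨f, rfl⟩ := Ideal.Quotient.mkₐ_surjective k q y
        have hsum : (Ideal.Quotient.mkₐ k q) f
            = ∑ j ∈ Finset.range (f.totalDegree + 1),
                (Ideal.Quotient.mkₐ k q) (homogeneousComponent j f) := by
          rw [← map_sum]
          exact congrArg _ f.sum_homogeneousComponent.symm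
        rw [hsum]
        refine Submodule.sum_mem _ fun j _ => ?_
        by_cases hjd : j ≤ d
        · refine Submodule.subset_span ?_
          refine ⟨homogeneousComponent j f, ?_, rfl⟩
          refine SetLike.mem_coe.mpr ((mem_restrictTotalDegree _ _ _).mpr ?_)
          exact le_trans (homogeneousComponent_isHomogeneous j f).totalDegree_le hjd
        · obtain ⟨m, rfl⟩ : ∃ m, j = d + 1 + m := ⟨j - (d+1), by omega⟩
          have hmem : (Ideal.Quotient.mkₐ k q) (homogeneousComponent (d+1+m) f)
              ∈ quotGradedPiece k r q (d+1+m) :=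
            Submodule.mem_map_of_mem ((mem_homogeneousSubmodule _ _).mpr
              (homogeneousComponent_isHomogeneous (d+1+m) f))
          obtain ⟨x, hx, hxe⟩ := claim m hmem
          simp only [LinearMap.mulLeft_apply] at hxe
          rw [← hxe]
          have hsmul : (t ^ (m+1)) * x = (Polynomial.X ^ (m+1) : Polynomial k) • x := by
            rw [Algebra.smul_def]
            have halg : (algebraMap (Polynomial k) (MvPolynomial (Fin (r+1)) k ⧸ q))
                (Polynomial.X ^ (m+1) : Polynomial k) = t ^ (m+1) := by
              show (Polynomial.aeval t) (Polynomial.X ^ (m+1) : Polynomial k) = t ^ (m+1)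
              rw [map_pow, Polynomial.aeval_X]
            rw [halg]
          rw [hsmul]
          exact Submodule.smul_mem _ _ (Submodule.subset_span (hWle hx))
      constructor
      refine ⟨S, ?_⟩
      have hWS : Submodule.span (Polynomial k) (W : Set _)
          = Submodule.span (Polynomial k) (S : Set (MvPolynomial (Fin (r+1)) k ⧸ q)) := by
        conv_lhs => rw [← hS]
        exact Submodule.span_span_of_tower k _ _
      rw [eq_top_iff]
      intro y _
      rw [← hWS]
      exact hspan y
    haveI hint : Algebra.IsIntegral (Polynomial k) (MvPolynomial (Fin (r+1)) k ⧸ q) :=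
      Algebra.IsIntegral.of_finite _ _
    obtain ⟨P0, P1, P2, h01, h12⟩ := Aux.exists_chain_of_two_le_krullDim
      (α := PrimeSpectrum (MvPolynomial (Fin (r+1)) k ⧸ q)) hqd
    haveI := P0.isPrime
    haveI := P1.isPrime
    haveI := P2.isPrime
    have h01' : P0.asIdeal < P1.asIdeal := h01
    have h12' : P1.asIdeal < P2.asIdeal := h12
    have hC01 : P0.asIdeal.comap (algebraMap (Polynomial k) _)
        < P1.asIdeal.comap (algebraMap (Polynomial k) _) := by
      obtain ⟨hle01, x, hxJ, hxI⟩ := SetLike.lt_iff_le_and_exists.mp h01'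
      exact Ideal.comap_lt_comap_of_integral_mem_sdiff hle01 ⟨hxJ, hxI⟩
        (Algebra.IsIntegral.isIntegral x)
    have hC12 : P1.asIdeal.comap (algebraMap (Polynomial k) _)
        < P2.asIdeal.comap (algebraMap (Polynomial k) _) := by
      obtain ⟨hle12, x, hxJ, hxI⟩ := SetLike.lt_iff_le_and_exists.mp h12'
      exact Ideal.comap_lt_comap_of_integral_mem_sdiff hle12 ⟨hxJ, hxI⟩
        (Algebra.IsIntegral.isIntegral x)
    have hne1 : P1.asIdeal.comap (algebraMap (Polynomial k) _) ≠ ⊥ := by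
      intro hb
      rw [hb] at hC01
      exact (not_lt_bot hC01)
    haveI : (P1.asIdeal.comap (algebraMap (Polynomial k)
        (MvPolynomial (Fin (r+1)) k ⧸ q))).IsPrime := inferInstance
    haveI : (P2.asIdeal.comap (algebraMap (Polynomial k)
        (MvPolynomial (Fin (r+1)) k ⧸ q))).IsPrime := inferInstance
    have hmax := IsPrime.to_maximal_ideal hne1
    exact absurd (hmax.eq_of_le (Ideal.IsPrime.ne_top inferInstance) hC12.le) hC12.ne
  -- finrank induction
  intro d
  induction d with
  | zero =>
    have h1 : ((Ideal.Quotient.mkₐ k q) 1 : MvPolynomial (Fin (r + 1)) k ⧸ q)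
        ∈ quotGradedPiece k r q 0 :=
      ⟨1, (mem_homogeneousSubmodule _ _).mpr (isHomogeneous_one (Fin (r+1)) k), rfl⟩
    have hne : ((Ideal.Quotient.mkₐ k q) 1 : MvPolynomial (Fin (r + 1)) k ⧸ q) ≠ 0 := by
      intro h0
      rw [Ideal.Quotient.mkₐ_eq_mk, Ideal.Quotient.eq_zero_iff_mem] at h0
      exact hqp.ne_top ((Ideal.eq_top_iff_one q).mpr h0)
    have hnt : Nontrivial (quotGradedPiece k r q 0) := by
      refine ⟨⟨⟨_, h1⟩, 0, fun hc => hne ?_⟩⟩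
      exact congrArg Subtype.val hc
    have hpos : 0 < Module.finrank k (quotGradedPiece k r q 0) :=
      Module.finrank_pos_iff.mpr hnt
    omega
  | succ d ih =>
    have h1 : Module.finrank k (quotGradedPiece k r q d)
        = Module.finrank k ((quotGradedPiece k r q d).map μ) :=
      (Submodule.equivMapOfInjective μ hμinj _).finrank_eq
    have h2 : Module.finrank k ((quotGradedPiece k r q d).map μ)
        < Module.finrank k (quotGradedPiece k r q (d + 1)) :=
      Submodule.finrank_lt_finrank_of_lt (lt_of_le_of_ne (hle d) (hlt d))
    omega

end KeyAux

theorem Aux.main_lower_bound (k : Type) [Field k] (r : ℕ)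
    (I : Ideal (MvPolynomial (Fin (r + 1)) k))
    (hI : I.IsHomogeneous (MvPolynomial.homogeneousSubmodule (Fin (r + 1)) k))
    (hdim : ringKrullDim (MvPolynomial (Fin (r + 1)) k ⧸ I) = 2)
    (hass : ∀ p ∈ associatedPrimes (MvPolynomial (Fin (r + 1)) k)
      (MvPolynomial (Fin (r + 1)) k ⧸ I),
      ringKrullDim (MvPolynomial (Fin (r + 1)) k ⧸ p) = 2) :
    ∀ d : ℕ, d + 1 ≤ Module.finrank k (quotGradedPiece k r I d) := by
  have hne : I ≠ ⊤ := by
    intro hIeq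
    haveI : Subsingleton (MvPolynomial (Fin (r + 1)) k ⧸ I) :=
      Ideal.Quotient.subsingleton_iff.mpr hIeq
    rw [ringKrullDim_eq_bot_of_subsingleton] at hdim
    exact absurd hdim (by norm_num)
  haveI : Nontrivial (MvPolynomial (Fin (r + 1)) k ⧸ I) := Ideal.Quotient.nontrivial_iff.mpr hne
  haveI : IsNoetherianRing (MvPolynomial (Fin (r + 1)) k) := inferInstance
  obtain ⟨p, hp⟩ := associatedPrimes.nonempty (MvPolynomial (Fin (r + 1)) k)
    (MvPolynomial (Fin (r + 1)) k ⧸ I)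
  have hpprime : p.IsPrime := hp.isPrime
  have hIp : I ≤ p := by
    obtain ⟨hpr, x, hx⟩ := hp
    intro a ha
    rw [hx]; refine Ideal.le_radical (Submodule.mem_colon_singleton.mpr ?_); rw [Submodule.mem_bot]
    obtain ⟨y, rfl⟩ := Ideal.Quotient.mk_surjective x
    have hsm : a • (Ideal.Quotient.mk I y) = Ideal.Quotient.mk I (a * y) := rfl
    rw [hsm, Ideal.Quotient.eq_zero_iff_mem]
    exact I.mul_mem_right y ha
  set q := (p.homogeneousCore (MvPolynomial.homogeneousSubmodule (Fin (r + 1)) k)).toIdeal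
    with hqdef
  have hqprime : q.IsPrime := hpprime.homogeneousCore
  have hqp : q ≤ p := Ideal.toIdeal_homogeneousCore_le _ p
  have hIq : I ≤ q := by
    conv_lhs => rw [← hI.toIdeal_homogeneousCore_eq_self]
    exact Ideal.homogeneousCore_mono _ hIp
  have hq2 : 2 ≤ ringKrullDim (MvPolynomial (Fin (r + 1)) k ⧸ q) := by
    have hsur : Function.Surjective (Ideal.Quotient.factor hqp) := by
      intro y
      obtain ⟨f, rfl⟩ := Ideal.Quotient.mk_surjective y
      exact ⟨Ideal.Quotient.mk q f, Ideal.Quotient.factor_mk hqp f⟩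
    have hh := ringKrullDim_le_of_surjective (Ideal.Quotient.factor hqp) hsur
    rw [hass p hp] at hh
    exact hh
  have hkey := Aux.key q hqprime hq2
  intro d
  refine le_trans (hkey d) ?_
  set π : (MvPolynomial (Fin (r + 1)) k ⧸ I) →ₐ[k] (MvPolynomial (Fin (r + 1)) k ⧸ q) :=
    Ideal.Quotient.liftₐ I (Ideal.Quotient.mkₐ k q) (fun a ha => by
      rw [Ideal.Quotient.mkₐ_eq_mk, Ideal.Quotient.eq_zero_iff_mem]
      exact hIq ha) with hπ
  have hmap : (quotGradedPiece k r I d).map π.toLinearMap = quotGradedPiece k r q d := by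
    rw [quotGradedPiece, quotGradedPiece, ← Submodule.map_comp]
    congr 1
  rw [← hmap]
  exact Submodule.finrank_map_le _ _

/-- If `C ⊂ ℙ^r_k` is a curve with homogeneous coordinate ring
`R = k[x_0, …, x_r]/I` (so `I` is homogeneous, `R` has Krull dimension `2`, and — `C` being
equidimensional of dimension one with no embedded components and `I` saturated — every
associated prime `p` of `R` satisfies `dim k[x]/p = 2`), then `dim_k R_d ≥ d + 1` for every
natural number `d`. -/
theorem hilbertFunction_curve_lower_bound (k : Type) [Field k] (r : ℕ)
    (I : Ideal (MvPolynomial (Fin (r + 1)) k))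
    (hI : I.IsHomogeneous (MvPolynomial.homogeneousSubmodule (Fin (r + 1)) k))
    (hdim : ringKrullDim (MvPolynomial (Fin (r + 1)) k ⧸ I) = 2)
    (hass : ∀ p ∈ associatedPrimes (MvPolynomial (Fin (r + 1)) k)
      (MvPolynomial (Fin (r + 1)) k ⧸ I),
      ringKrullDim (MvPolynomial (Fin (r + 1)) k ⧸ p) = 2) :
    ∀ d : ℕ, d + 1 ≤ hilbertFunction k r I d :=
  fun d => Aux.main_lower_bound k r I hI hdim hass d
end
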